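/- Define the lower critical field h_ℓ := (4πJ·sinh(γ)/γ)·Σ_{n∈ℤ} 1/cosh(π²(1/2 − n)/γ) (so that ε̃(π/2) = 0 exactly when h = h_ℓ). If 0 ≤ h < h_ℓ, then ε̃(x) < 0 for every real x, and ε̃(x − iγ) is real and strictly positive for every real x. -/

import Mathlib

set_option maxHeartbeats 1000000

open Filter Topology Real

/-- The analytically continued dressed energy
`ε̃(x) = h/2 − (2πJ·sinh γ/γ)·Σ_{n∈ℤ} 1/cosh(π(x − nπ)/γ)`. -/
noncomputable def dressedEnergyC (γ J h : ℝ) (x : ℂ) : ℂ :=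
  (h / 2 : ℝ) - ((2 * Real.pi * J * Real.sinh γ / γ : ℝ) : ℂ) *
    ∑' n : ℤ, 1 / Complex.cosh ((Real.pi : ℂ) * (x - (n : ℂ) * Real.pi) / (γ : ℂ))

/-- The lower critical field
`h_ℓ = (4πJ·sinh γ/γ)·Σ_{n∈ℤ} 1/cosh(π²(1/2 − n)/γ)`. -/
noncomputable def lowerCriticalField (γ J : ℝ) : ℝ :=
  (4 * Real.pi * J * Real.sinh γ / γ) *
    ∑' n : ℤ, 1 / Real.cosh (Real.pi ^ 2 * (1/2 - (n : ℝ)) / γ)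


lemma tanh_sub_tanh (x y : ℝ) :
    Real.tanh x - Real.tanh y = Real.sinh (x - y) / (Real.cosh x * Real.cosh y) := by
  rw [Real.tanh_eq_sinh_div_cosh, Real.tanh_eq_sinh_div_cosh,
    div_sub_div _ _ (Real.cosh_pos x).ne' (Real.cosh_pos y).ne', Real.sinh_sub]

lemma tanh_monotone : Monotone Real.tanh := by
  intro x y hxy
  have h := tanh_sub_tanh y x
  have h2 : 0 ≤ Real.sinh (y - x) := by
    rw [← Real.sinh_zero]
    exact Real.sinh_le_sinh.2 (by linarith)
  nlinarith [Real.cosh_pos x, Real.cosh_pos y,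
    div_nonneg h2 (le_of_lt (mul_pos (Real.cosh_pos y) (Real.cosh_pos x)))]

lemma tanh_le_one (x : ℝ) : Real.tanh x ≤ 1 := by
  rw [Real.tanh_eq_sinh_div_cosh, div_le_one (Real.cosh_pos x)]
  nlinarith [Real.cosh_add_sinh x, Real.exp_pos x, Real.cosh_sq_sub_sinh_sq x, Real.cosh_pos x]

lemma neg_one_le_tanh (x : ℝ) : -1 ≤ Real.tanh x := by
  rw [Real.tanh_eq_sinh_div_cosh, le_div_iff₀ (Real.cosh_pos x)]
  nlinarith [Real.cosh_add_sinh x, Real.exp_pos x]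

lemma tanh_eq' (x : ℝ) : Real.tanh x = (1 - Real.exp (-(2*x))) / (1 + Real.exp (-(2*x))) := by
  rw [Real.tanh_eq_sinh_div_cosh, Real.sinh_eq, Real.cosh_eq]
  have h1 : Real.exp (-(2*x)) = Real.exp (-x) * Real.exp (-x) := by
    rw [← Real.exp_add]; ring_nf
  have h2 : Real.exp x * Real.exp (-x) = 1 := by
    rw [← Real.exp_add]; simp
  have h3 : (0:ℝ) < 1 + Real.exp (-(2*x)) := by positivity
  have h4 := Real.exp_pos x
  have h5 := Real.exp_pos (-x)
  rw [div_eq_div_iff (by positivity) h3.ne']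
  nlinarith [h1, h2]

lemma tendsto_tanh_atTop : Tendsto Real.tanh atTop (𝓝 1) := by
  have he : Tendsto (fun x : ℝ => Real.exp (-(2*x))) atTop (𝓝 0) := by
    apply Real.tendsto_exp_atBot.comp
    have : Tendsto (fun x : ℝ => 2*x) atTop atTop :=
      (tendsto_id.const_mul_atTop (by norm_num))
    exact tendsto_neg_atBot_iff.2 this
  have h2 : Tendsto (fun x : ℝ => (1 - Real.exp (-(2*x))) / (1 + Real.exp (-(2*x)))) atTop
      (𝓝 ((1 - 0) / (1 + 0))) :=
    ((tendsto_const_nhds.sub he).div (tendsto_const_nhds.add he) (by norm_num))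
  simp only [sub_zero, add_zero, div_one] at h2
  have h3 : (fun x : ℝ => (1 - Real.exp (-(2*x))) / (1 + Real.exp (-(2*x)))) = Real.tanh := by
    funext x; rw [tanh_eq' x]
  rwa [h3] at h2

lemma tendsto_tanh_atBot : Tendsto Real.tanh atBot (𝓝 (-1)) := by
  have h := (tendsto_tanh_atTop.comp tendsto_neg_atBot_atTop).neg
  have h3 : (fun x : ℝ => -(Real.tanh ∘ Neg.neg) x) = Real.tanh := by
    funext x; simp only [Function.comp_apply]; rw [Real.tanh_neg, neg_neg]
  rwa [h3] at h

lemma icc_telescope (u : ℤ → ℝ) (b : ℤ) (K : ℕ) :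
    ∑ N ∈ Finset.Icc b (b + K), (u N - u (N + 1)) = u b - u (b + K + 1) := by
  induction K with
  | zero => simp
  | succ K ih =>
    have hins : Finset.Icc b (b + ((K:ℤ) + 1)) = insert (b + K + 1) (Finset.Icc b (b + K)) := by
      ext n
      simp only [Finset.mem_Icc, Finset.mem_insert]
      omega
    have hnot : b + (K:ℤ) + 1 ∉ Finset.Icc b (b + (K:ℤ)) := by
      simp only [Finset.mem_Icc]; omega
    push_cast
    rw [hins, Finset.sum_insert hnot, ih]
    have h1 : b + ((K:ℤ) + 1) + 1 = b + (K:ℤ) + 1 + 1 := by ring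
    rw [h1]
    ring

lemma hasSum_telescope {u : ℤ → ℝ} (hu : Antitone u) {A B : ℝ}
    (hA : Tendsto u atTop (𝓝 A)) (hB : Tendsto u atBot (𝓝 B)) :
    HasSum (fun N : ℤ => u N - u (N + 1)) (B - A) := by
  have hAle : ∀ n, A ≤ u n := fun n =>
    le_of_tendsto hA (eventually_atTop.2 ⟨n, fun m hm => hu hm⟩)
  have hleB : ∀ n, u n ≤ B := fun n =>
    ge_of_tendsto hB (eventually_atBot.2 ⟨n, fun m hm => hu hm⟩)
  have hnn : ∀ N : ℤ, 0 ≤ u N - u (N + 1) := fun N => sub_nonneg.2 (hu (by omega))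
  have hsummable : Summable (fun N : ℤ => u N - u (N + 1)) := by
    apply summable_of_sum_le (fun N => hnn N)
    intro s
    set K : ℕ := s.sup Int.natAbs with hK
    have hsub : s ⊆ Finset.Icc (-(K:ℤ)) K := by
      intro n hn
      simp only [Finset.mem_Icc]
      have := Finset.le_sup (f := Int.natAbs) hn
      omega
    calc ∑ x ∈ s, (u x - u (x + 1)) ≤ ∑ x ∈ Finset.Icc (-(K:ℤ)) K, (u x - u (x + 1)) :=
          Finset.sum_le_sum_of_subset_of_nonneg hsub (fun i _ _ => hnn i)
      _ = u (-(K:ℤ)) - u (-(K:ℤ) + (2*K) + 1) := by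
          have : Finset.Icc (-(K:ℤ)) (K:ℤ) = Finset.Icc (-(K:ℤ)) (-(K:ℤ) + (2*K : ℕ)) := by
            congr 1; push_cast; ring
          rw [this, icc_telescope u (-(K:ℤ)) (2*K)]
          push_cast; ring_nf
      _ ≤ B - A := sub_le_sub (hleB _) (hAle _)
  -- limit of partial sums over Icc (-K) K
  have hcov : Tendsto (fun K : ℕ => Finset.Icc (-(K:ℤ)) K) atTop atTop := by
    apply tendsto_atTop_finset_of_monotone
    · intro i j hij
      apply Finset.Icc_subset_Icc <;> omega
    · intro n
      exact ⟨n.natAbs, by simp only [Finset.mem_Icc]; omega⟩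
  have h1 : Tendsto (fun K : ℕ => ∑ N ∈ Finset.Icc (-(K:ℤ)) K, (u N - u (N + 1))) atTop
      (𝓝 (∑' N : ℤ, (u N - u (N + 1)))) := hsummable.hasSum.comp hcov
  have heq : ∀ K : ℕ, ∑ N ∈ Finset.Icc (-(K:ℤ)) K, (u N - u (N + 1))
      = u (-(K:ℤ)) - u ((K:ℤ) + 1) := by
    intro K
    have h2 : Finset.Icc (-(K:ℤ)) (K:ℤ) = Finset.Icc (-(K:ℤ)) (-(K:ℤ) + (2*K : ℕ)) := by
      congr 1; push_cast; ring
    rw [h2, icc_telescope u (-(K:ℤ)) (2*K)]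
    have h3 : (-(K:ℤ) + (2*K : ℕ) + 1) = (K:ℤ) + 1 := by push_cast; ring
    rw [h3]
  have h2 : Tendsto (fun K : ℕ => u (-(K:ℤ)) - u ((K:ℤ) + 1)) atTop (𝓝 (B - A)) := by
    apply Tendsto.sub
    · apply hB.comp
      have : Tendsto (fun K : ℕ => ((K:ℤ))) atTop atTop := tendsto_natCast_atTop_atTop
      exact tendsto_neg_atBot_iff.2 this
    · apply hA.comp
      exact tendsto_atTop_add_const_right _ _ tendsto_natCast_atTop_atTop
  have hval : (∑' N : ℤ, (u N - u (N + 1))) = B - A :=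
    tendsto_nhds_unique (by simpa only [heq] using h1) h2
  exact hval ▸ hsummable.hasSum

lemma hasSum_telescope' {u : ℤ → ℝ} (hu : Antitone u) {A B : ℝ}
    (hA : Tendsto u atTop (𝓝 A)) (hB : Tendsto u atBot (𝓝 B)) (m : ℕ) :
    HasSum (fun N : ℤ => u N - u (N + m)) ((m : ℝ) * (B - A)) := by
  have base : ∀ r : ℤ, HasSum (fun N : ℤ => u (N + r) - u (N + r + 1)) (B - A) := by
    intro r
    have hu' : Antitone (fun N : ℤ => u (N + r)) := fun i j hij => hu (by omega)
    have hA' : Tendsto (fun N : ℤ => u (N + r)) atTop (𝓝 A) :=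
      hA.comp (tendsto_atTop_add_const_right _ _ tendsto_id)
    have hB' : Tendsto (fun N : ℤ => u (N + r)) atBot (𝓝 B) :=
      hB.comp (tendsto_atBot_add_const_right _ _ tendsto_id)
    have h := hasSum_telescope hu' hA' hB'
    simpa only [add_right_comm] using h
  have hsum : HasSum (fun N : ℤ => ∑ r ∈ Finset.range m, (u (N + r) - u (N + r + 1)))
      (∑ _r ∈ Finset.range m, (B - A)) := hasSum_sum (fun r _ => base (r : ℤ))
  rw [Finset.sum_const, Finset.card_range, nsmul_eq_mul] at hsum
  convert hsum using 1
  funext N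
  have hs := Finset.sum_range_sub' (fun i : ℕ => u (N + i)) m
  simp only [Nat.cast_zero, add_zero] at hs
  rw [← hs]
  apply Finset.sum_congr rfl
  intro i _
  congr 2
  push_cast
  ring

lemma one_div_cosh_le (t : ℝ) : 1 / Real.cosh t ≤ 2 * Real.exp (-|t|) := by
  rw [← Real.cosh_abs t, Real.exp_neg]
  have h2 : Real.exp |t| / 2 ≤ Real.cosh |t| := by
    rw [Real.cosh_eq]
    have := Real.exp_pos (-|t|)
    linarith
  rw [div_le_iff₀ (Real.cosh_pos _)]
  have h3 : (0:ℝ) < rexp |t| := Real.exp_pos _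
  rw [show 2 * (rexp |t|)⁻¹ * cosh |t| = (2 * cosh |t|) / rexp |t| by ring,
    le_div_iff₀ h3]
  linarith

lemma summable_sech (α β : ℝ) (hα : α ≠ 0) :
    Summable fun n : ℤ => 1 / Real.cosh (α * n + β) := by
  set r : ℝ := Real.exp (-|α|) with hr
  have hr0 : 0 ≤ r := (Real.exp_pos _).le
  have hr1 : r < 1 := Real.exp_lt_one_iff.2 (by simp [abs_pos.2 hα])
  have hgeom : Summable fun n : ℤ => (2 * Real.exp |β|) * r ^ n.natAbs := by
    apply Summable.mul_left
    apply Summable.of_nat_of_neg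
    · simpa using summable_geometric_of_lt_one hr0 hr1
    · simpa using summable_geometric_of_lt_one hr0 hr1
  apply Summable.of_nonneg_of_le (fun n => by positivity) _ hgeom
  intro n
  calc 1 / Real.cosh (α * n + β) ≤ 2 * Real.exp (-|α * n + β|) := one_div_cosh_le _
    _ ≤ (2 * Real.exp |β|) * r ^ n.natAbs := by
        rw [hr, ← Real.exp_nat_mul, mul_assoc, ← Real.exp_add]
        have harg : -|α * n + β| ≤ |β| + (n.natAbs : ℝ) * -|α| := by
          have h1 : |α * (n:ℝ)| ≤ |α * n + β| + |β| := by
            calc |α * (n:ℝ)| = |(α * n + β) - β| := by ring_nf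
              _ ≤ |α * n + β| + |β| := abs_sub _ _
          have h2 : |α * (n:ℝ)| = |α| * (n.natAbs : ℝ) := by
            rw [abs_mul, Nat.cast_natAbs, Int.cast_abs]
          nlinarith [abs_nonneg (α * (n:ℝ))]
        have := Real.exp_le_exp.2 harg
        linarith [this, Real.exp_pos (-|α * n + β|)]

lemma tsum_int_even_add_odd {f : ℤ → ℝ} (hf : Summable f) :
    ∑' n : ℤ, f n = (∑' n : ℤ, f (2 * n)) + ∑' n : ℤ, f (2 * n + 1) := by
  classical
  let e : ℤ × Bool ≃ ℤ :=
  { toFun := fun p => 2 * p.1 + (if p.2 then 1 else 0)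
    invFun := fun n => (n / 2, decide (n % 2 = 1))
    left_inv := by
      rintro ⟨k, b⟩
      cases b <;> simp <;> omega
    right_inv := by
      intro n
      simp only
      by_cases h : n % 2 = 1 <;> simp [h] <;> omega }
  have hfe : Summable (f ∘ e) := e.summable_iff.2 hf
  have h1 : ∑' p : ℤ × Bool, f (e p) = ∑' n : ℤ, f n := e.tsum_eq f
  have h2 : ∑' p : ℤ × Bool, f (e p) = ∑' n : ℤ, ∑' b : Bool, f (e (n, b)) :=
    Summable.tsum_prod' hfe (fun _ => Summable.of_finite)
  have h3 : ∀ n : ℤ, ∑' b : Bool, f (e (n, b)) = f (2 * n) + f (2 * n + 1) := by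
    intro n
    rw [tsum_bool]
    simp [e]
  rw [← h1, h2, tsum_congr h3]
  have hs1 : Summable fun n : ℤ => f (2 * n) :=
    hf.comp_injective (fun x y hxy => by omega)
  have hs2 : Summable fun n : ℤ => f (2 * n + 1) :=
    hf.comp_injective (fun x y hxy => by omega)
  exact Summable.tsum_add hs1 hs2

/-! ### The lattice sums `E` and `S` -/

lemma sech_mul_sech (A B : ℝ) (h : A ≠ B) :
    1 / Real.cosh A * (1 / Real.cosh B) = (Real.tanh A - Real.tanh B) / Real.sinh (A - B) := by
  rw [tanh_sub_tanh]
  have hs : Real.sinh (A - B) ≠ 0 := by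
    rw [Ne, Real.sinh_eq_zero]
    exact sub_ne_zero.2 h
  field_simp

noncomputable def Efun (a x : ℝ) : ℝ := ∑' n : ℤ, 1 / Real.cosh (a * x - 2 * a * π * n)

noncomputable def Sfun (a x : ℝ) : ℝ := ∑' n : ℤ, 1 / Real.cosh (a * x - a * π * n)

lemma summable_Efun {a : ℝ} (ha : 0 < a) (x : ℝ) :
    Summable fun n : ℤ => 1 / Real.cosh (a * x - 2 * a * π * n) := by
  have hne : -(2 * a * π) ≠ 0 := by
    have := Real.pi_pos; intro h; nlinarith
  exact (summable_sech (-(2 * a * π)) (a * x) hne).congr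
    (fun n => by congr 1; ring)

lemma summable_Sfun {a : ℝ} (ha : 0 < a) (x : ℝ) :
    Summable fun n : ℤ => 1 / Real.cosh (a * x - a * π * n) := by
  have hne : -(a * π) ≠ 0 := by
    have := Real.pi_pos; intro h; nlinarith
  exact (summable_sech (-(a * π)) (a * x) hne).congr
    (fun n => by congr 1; ring)

lemma Efun_pos {a : ℝ} (ha : 0 < a) (x : ℝ) : 0 < Efun a x := by
  apply Summable.tsum_pos (summable_Efun ha x) (fun n => by positivity) 0
  positivity

lemma Efun_even {a : ℝ} (x : ℝ) : Efun a (-x) = Efun a x := by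
  unfold Efun
  rw [← (Equiv.neg ℤ).tsum_eq (fun n : ℤ => 1 / Real.cosh (a * x - 2 * a * π * n))]
  apply tsum_congr
  intro n
  simp only [Equiv.neg_apply]
  rw [← Real.cosh_neg (a * x - 2 * a * π * (-n : ℤ))]
  congr 1
  push_cast
  ring

lemma Sfun_eq_Efun_add {a : ℝ} (ha : 0 < a) (x : ℝ) :
    Sfun a x = Efun a x + Efun a (x - π) := by
  unfold Sfun Efun
  rw [tsum_int_even_add_odd (summable_Sfun ha x)]
  congr 1
  · apply tsum_congr; intro n; congr 1; push_cast; ring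
  · apply tsum_congr; intro n; congr 1; push_cast; ring

/-! ### The product identity: `E x * E (x + π)` is independent of `x` -/

lemma Efun_mul_Efun {a : ℝ} (ha : 0 < a) (x : ℝ) :
    Efun a x * Efun a (x + π) =
      ∑' j : ℕ, 2 * (2 * (j : ℝ) + 1) / Real.sinh ((2 * (j : ℝ) + 1) * (a * π)) := by
  have hπ := Real.pi_pos
  have haπ : 0 < a * π := by positivity
  set u : ℤ → ℝ := fun N => Real.tanh (a * x - a * π * N) with hu_def
  -- basic properties of u
  have hu_anti : Antitone u := by
    intro i j hij
    exact tanh_monotone (by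
      have : (i:ℝ) ≤ (j:ℝ) := by exact_mod_cast hij
      nlinarith)
  have hu_top : Tendsto u atTop (𝓝 (-1)) := by
    apply tendsto_tanh_atBot.comp
    have h1 : Tendsto (fun N : ℤ => a * π * (N : ℝ)) atTop atTop :=
      tendsto_intCast_atTop_atTop.const_mul_atTop haπ
    have h2 : Tendsto (fun N : ℤ => -(a * π * (N : ℝ))) atTop atBot :=
      tendsto_neg_atBot_iff.2 h1
    have h3 := tendsto_atBot_add_const_left atTop (a * x) h2
    exact h3.congr (fun N => by ring)
  have hu_bot : Tendsto u atBot (𝓝 1) := by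
    apply tendsto_tanh_atTop.comp
    have h1 : Tendsto (fun N : ℤ => a * π * (N : ℝ)) atBot atBot := by
      have h0 : Tendsto (fun N : ℤ => ((-N : ℤ) : ℝ)) atBot atTop :=
        tendsto_intCast_atTop_atTop.comp tendsto_neg_atBot_atTop
      have h0' : Tendsto (fun N : ℤ => (N : ℝ)) atBot atBot := by
        have := tendsto_neg_atBot_iff.2 h0
        refine this.congr (fun N => ?_)
        push_cast
        ring
      exact h0'.const_mul_atBot haπ
    have h2 : Tendsto (fun N : ℤ => -(a * π * (N : ℝ))) atBot atTop :=
      tendsto_neg_atTop_iff.2 h1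
    have h3 := tendsto_atTop_add_const_left atBot (a * x) h2
    exact h3.congr (fun N => by ring)
  -- the full-lattice telescoping sum
  have hW : ∀ m : ℕ, ∑' N : ℤ, (u N - u (N + (m:ℤ))) = 2 * m := by
    intro m
    have h := hasSum_telescope' hu_anti hu_top hu_bot m
    rw [h.tsum_eq]
    ring
  have hWsummable : ∀ m : ℕ, Summable fun N : ℤ => u N - u (N + (m:ℤ)) := by
    intro m
    exact (hasSum_telescope' hu_anti hu_top hu_bot m).summable
  -- step 1: product of sums as sum over pairs
  set f : ℤ → ℝ := fun n => 1 / Real.cosh (a * x - 2 * a * π * n) with hf_def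
  set g : ℤ → ℝ := fun m => 1 / Real.cosh (a * (x + π) - 2 * a * π * m) with hg_def
  have hfs : Summable f := summable_Efun ha x
  have hgs : Summable g := summable_Efun ha (x + π)
  have step1 : Efun a x * Efun a (x + π) = ∑' z : ℤ × ℤ, f z.1 * g z.2 := by
    unfold Efun
    apply tsum_mul_tsum_of_summable_norm
    · exact hfs.abs.congr (fun n => (Real.norm_eq_abs _).symm)
    · exact hgs.abs.congr (fun n => (Real.norm_eq_abs _).symm)
  -- step 2: shear the lattice
  set q : ℤ × ℤ ≃ ℤ × ℤ :=
    { toFun := fun p => (p.2, p.2 + p.1)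
      invFun := fun z => (z.2 - z.1, z.1)
      left_inv := by rintro ⟨l, n⟩; simp
      right_inv := by rintro ⟨n, m⟩; simp } with hq_def
  have step2 : ∑' z : ℤ × ℤ, f z.1 * g z.2 = ∑' p : ℤ × ℤ, f p.2 * g (p.2 + p.1) :=
    (q.tsum_eq (fun z : ℤ × ℤ => f z.1 * g z.2)).symm
  -- step 3: pointwise identity
  have step3 : ∀ l n : ℤ, f n * g (n + l) =
      (u (2*n) - u (2*n + (2*l - 1))) / Real.sinh (((2*l - 1 : ℤ) : ℝ) * (a * π)) := by
    intro l n
    set A : ℝ := a * x - 2 * a * π * (n:ℝ) with hA_def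
    set B : ℝ := a * (x + π) - 2 * a * π * ((n + l : ℤ) : ℝ) with hB_def
    have hAB : A - B = ((2*l - 1 : ℤ) : ℝ) * (a * π) := by
      rw [hA_def, hB_def]; push_cast; ring
    have hlq : ((2*l - 1 : ℤ) : ℝ) ≠ 0 := by
      exact_mod_cast (show (2*l - 1 : ℤ) ≠ 0 by omega)
    have hne : A ≠ B := by
      intro h
      have h0 : ((2*l - 1 : ℤ) : ℝ) * (a * π) = 0 := by rw [← hAB, h]; ring
      rcases mul_eq_zero.1 h0 with h' | h'
      · exact hlq h'
      · exact absurd h' (by positivity)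
    have h := sech_mul_sech A B hne
    simp only [hf_def, hg_def, hu_def]
    rw [h, hAB]
    congr 2
    · rw [hA_def]; congr 1; push_cast; ring
    · rw [hB_def]; congr 1; push_cast; ring
  -- summability of the rearranged double sum
  have hT : Summable (fun p : ℤ × ℤ => f p.2 * g (p.2 + p.1)) := by
    have h0 : Summable (fun z : ℤ × ℤ => f z.1 * g z.2) :=
      summable_mul_of_summable_norm
        (hfs.abs.congr (fun n => (Real.norm_eq_abs _).symm))
        (hgs.abs.congr (fun n => (Real.norm_eq_abs _).symm))
    exact q.summable_iff.2 h0
  -- step 4: iterate the double sum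
  have step4 : ∑' p : ℤ × ℤ, f p.2 * g (p.2 + p.1)
      = ∑' l : ℤ, ∑' n : ℤ, f n * g (n + l) :=
    Summable.tsum_prod' hT (fun l => hT.prod_factor l)
  -- inner sums
  set Inner : ℤ → ℝ := fun l => ∑' n : ℤ, f n * g (n + l) with hInner_def
  have hInner_summable : Summable Inner :=
    (hT.hasSum.prod_fiberwise (fun l => (hT.prod_factor l).hasSum)).summable
  -- evaluate pairwise sums Inner (j+1) + Inner (-j)
  have pair : ∀ j : ℕ, Inner (j + 1) + Inner (-(j:ℤ)) =
      2 * (2 * (j : ℝ) + 1) / Real.sinh ((2 * (j : ℝ) + 1) * (a * π)) := by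
    intro j
    set m : ℕ := 2 * j + 1 with hm_def
    have hsinh_pos : 0 < Real.sinh ((m:ℝ) * (a * π)) := by
      rw [← Real.sinh_zero]
      apply Real.sinh_lt_sinh.2
      positivity
    -- Inner (j+1)
    have hI1 : Inner (j + 1) = (∑' n : ℤ, (u (2*n) - u (2*n + (m:ℤ)))) / Real.sinh ((m:ℝ) * (a * π)) := by
      rw [hInner_def]
      simp only []
      rw [← tsum_div_const]
      apply tsum_congr
      intro n
      rw [step3 ((j:ℤ)+1) n]
      have e2 : (2*((j:ℤ)+1) - 1 : ℤ) = (m:ℤ) := by push_cast [hm_def]; ring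
      rw [e2]
      norm_cast
    -- Inner (-j)
    have hI2 : Inner (-(j:ℤ)) = (∑' n : ℤ, (u (2*n+1) - u (2*n+1 + (m:ℤ)))) / Real.sinh ((m:ℝ) * (a * π)) := by
      rw [hInner_def]
      simp only []
      have h1 : ∀ n : ℤ, f n * g (n + (-(j:ℤ))) =
          (u (2*n - (m:ℤ)) - u (2*n)) / Real.sinh ((m:ℝ) * (a * π)) := by
        intro n
        rw [step3 (-(j:ℤ)) n]
        have e2 : (2*(-(j:ℤ)) - 1 : ℤ) = -(m:ℤ) := by push_cast [hm_def]; ring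
        rw [e2]
        have e3 : ((-(m:ℤ) : ℤ) : ℝ) * (a * π) = -((m:ℝ) * (a * π)) := by push_cast; ring
        rw [e3, Real.sinh_neg, div_neg, ← neg_div, neg_sub]
        have e4 : 2*n + -(m:ℤ) = 2*n - (m:ℤ) := by ring
        rw [e4]
      calc ∑' n : ℤ, f n * g (n + (-(j:ℤ)))
          = ∑' n : ℤ, (u (2*n - (m:ℤ)) - u (2*n)) / Real.sinh ((m:ℝ) * (a * π)) :=
            tsum_congr h1
        _ = (∑' n : ℤ, (u (2*n - (m:ℤ)) - u (2*n))) / Real.sinh ((m:ℝ) * (a * π)) := by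
            rw [tsum_div_const]
        _ = (∑' n : ℤ, (u (2*n+1) - u (2*n+1 + (m:ℤ)))) / Real.sinh ((m:ℝ) * (a * π)) := by
            congr 1
            rw [← (Equiv.addRight ((j:ℤ)+1)).tsum_eq (fun n : ℤ => u (2*n - (m:ℤ)) - u (2*n))]
            apply tsum_congr
            intro n
            simp only [Equiv.coe_addRight]
            have e1 : 2*(n + ((j:ℤ)+1)) - (m:ℤ) = 2*n + 1 := by omega
            have e2 : 2*(n + ((j:ℤ)+1)) = 2*n + 1 + (m:ℤ) := by omega
            rw [e1, e2]
    rw [hI1, hI2, ← add_div]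
    have hsplit : (∑' N : ℤ, (u N - u (N + (m:ℤ))))
        = (∑' n : ℤ, (u (2*n) - u (2*n + (m:ℤ)))) + ∑' n : ℤ, (u (2*n+1) - u (2*n+1 + (m:ℤ))) :=
      tsum_int_even_add_odd (hWsummable m)
    rw [← hsplit, hW m]
    rw [hm_def]
    push_cast
    ring_nf
  -- assemble: split the l-sum into j+1 and -j parts
  have hsplit_l : ∑' l : ℤ, Inner l = ∑' j : ℕ, (Inner (j+1) + Inner (-(j:ℤ))) := by
    have hs1 : Summable fun j : ℕ => Inner ((j:ℤ) + 1) :=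
      hInner_summable.comp_injective (fun x y hxy => by omega)
    have hs2 : Summable fun j : ℕ => Inner (-((j:ℤ) + 1)) :=
      hInner_summable.comp_injective (fun x y hxy => by omega)
    have hs3 : Summable fun j : ℕ => Inner (-(j:ℤ)) :=
      hInner_summable.comp_injective (fun x y hxy => by omega)
    rw [tsum_of_add_one_of_neg_add_one hs1 hs2]
    have h4 : Inner 0 + ∑' j : ℕ, Inner (-((j:ℤ)+1)) = ∑' j : ℕ, Inner (-(j:ℤ)) := by
      rw [Summable.tsum_eq_zero_add hs3]
      simp only [Nat.cast_zero, neg_zero]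
      refine congrArg (fun z => Inner 0 + z) (tsum_congr (fun j => ?_))
      norm_cast
    rw [add_assoc, h4, Summable.tsum_add hs1 hs3]
  calc Efun a x * Efun a (x + π) = ∑' l : ℤ, Inner l := by
        rw [step1, step2, step4]
      _ = ∑' j : ℕ, (Inner (j+1) + Inner (-(j:ℤ))) := hsplit_l
      _ = ∑' j : ℕ, 2 * (2 * (j : ℝ) + 1) / Real.sinh ((2 * (j : ℝ) + 1) * (a * π)) :=
        tsum_congr pair

lemma Efun_mul_const {a : ℝ} (ha : 0 < a) (x y : ℝ) :
    Efun a x * Efun a (x + π) = Efun a y * Efun a (y + π) := by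
  rw [Efun_mul_Efun ha x, Efun_mul_Efun ha y]

/-! ### The key inequality -/

lemma Sfun_ge {a : ℝ} (ha : 0 < a) (x : ℝ) : Sfun a (π/2) ≤ Sfun a x := by
  have hπ := Real.pi_pos
  have h1 : Efun a (x - π) * Efun a x = Efun a (π/2) * Efun a (π/2) := by
    have h2 := Efun_mul_const ha (x - π) (-(π/2))
    have h3 : x - π + π = x := by ring
    have h4 : -(π/2) + π = π/2 := by ring
    rw [h3, h4] at h2
    rw [h2, Efun_even]
  have h5 : Sfun a (π/2) = 2 * Efun a (π/2) := by
    rw [Sfun_eq_Efun_add ha]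
    have h6 : π/2 - π = -(π/2) := by ring
    rw [h6, Efun_even]
    ring
  rw [h5, Sfun_eq_Efun_add ha x]
  have hx := Efun_pos ha x
  have hxp := Efun_pos ha (x - π)
  have hh := Efun_pos ha (π/2)
  nlinarith [sq_nonneg (Efun a x - Efun a (π/2))]

/-! ### Reduction of the complex sums to real ones -/

lemma tsum_complex_real (γ : ℝ) (hγ : 0 < γ) (x : ℝ) :
    ∑' n : ℤ, 1 / Complex.cosh ((Real.pi : ℂ) * ((x:ℂ) - (n : ℂ) * Real.pi) / (γ : ℂ))
      = ((Sfun (π/γ) x : ℝ) : ℂ) := by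
  rw [Sfun, Complex.ofReal_tsum]
  apply tsum_congr
  intro n
  have harg : (Real.pi : ℂ) * ((x:ℂ) - (n : ℂ) * Real.pi) / (γ : ℂ)
      = ((π/γ * x - π/γ * π * (n:ℝ) : ℝ) : ℂ) := by
    have hγ' : (γ:ℂ) ≠ 0 := by exact_mod_cast hγ.ne'
    field_simp
    push_cast
    field_simp
  rw [harg, ← Complex.ofReal_cosh]
  push_cast
  ring

lemma tsum_complex_shift (γ : ℝ) (hγ : 0 < γ) (x : ℝ) :
    ∑' n : ℤ, 1 / Complex.cosh ((Real.pi : ℂ) * (((x:ℂ) - Complex.I * (γ:ℂ)) - (n : ℂ) * Real.pi) / (γ : ℂ))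
      = -((Sfun (π/γ) x : ℝ) : ℂ) := by
  rw [Sfun, Complex.ofReal_tsum, ← tsum_neg]
  apply tsum_congr
  intro n
  have hγ' : (γ:ℂ) ≠ 0 := by exact_mod_cast hγ.ne'
  have harg : (Real.pi : ℂ) * (((x:ℂ) - Complex.I * (γ:ℂ)) - (n : ℂ) * Real.pi) / (γ : ℂ)
      = ((π/γ * x - π/γ * π * (n:ℝ) : ℝ) : ℂ) - (Real.pi : ℂ) * Complex.I := by
    field_simp
    push_cast
    field_simp
    ring
  rw [harg]
  have hcosh : Complex.cosh (((π/γ * x - π/γ * π * (n:ℝ) : ℝ) : ℂ) - (Real.pi : ℂ) * Complex.I)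
      = -Complex.cosh (((π/γ * x - π/γ * π * (n:ℝ) : ℝ) : ℂ)) := by
    rw [Complex.cosh_sub, Complex.cosh_mul_I, Complex.sinh_mul_I,
      ← Complex.ofReal_cos, ← Complex.ofReal_sin, Real.cos_pi, Real.sin_pi]
    push_cast
    ring
  rw [hcosh, div_neg, ← Complex.ofReal_cosh]
  push_cast
  ring

/-- If `0 ≤ h < h_ℓ`, then `ε̃ < 0` on the real line, while `ε̃(x − iγ)` is real and
strictly positive for every real `x`. -/

theorem dressedEnergyC_sign_below_lower_critical_field (γ J h : ℝ)
    (hγ : 0 < γ) (hJ : 0 < J) (hh0 : 0 ≤ h) (hhl : h < lowerCriticalField γ J) :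
    (∀ x : ℝ, (dressedEnergyC γ J h (x : ℂ)).im = 0 ∧ (dressedEnergyC γ J h (x : ℂ)).re < 0) ∧
    (∀ x : ℝ, (dressedEnergyC γ J h ((x : ℂ) - Complex.I * (γ : ℂ))).im = 0 ∧
      0 < (dressedEnergyC γ J h ((x : ℂ) - Complex.I * (γ : ℂ))).re) := by
  have hπ := Real.pi_pos
  have ha : 0 < π/γ := by positivity
  have hsinh : 0 < Real.sinh γ := by
    rw [← Real.sinh_zero]; exact Real.sinh_lt_sinh.2 hγ
  have hCpos : 0 < 2 * π * J * Real.sinh γ / γ := by positivity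
  set C : ℝ := 2 * π * J * Real.sinh γ / γ with hC_def
  have hl : lowerCriticalField γ J = 2 * C * Sfun (π/γ) (π/2) := by
    rw [lowerCriticalField, Sfun]
    have hcongr : ∀ n : ℤ, 1 / Real.cosh (π^2 * (1/2 - (n:ℝ)) / γ)
        = 1 / Real.cosh (π/γ * (π/2) - π/γ * π * n) := by
      intro n
      have harg : π^2 * (1/2 - (n:ℝ)) / γ = π/γ * (π/2) - π/γ * π * n := by
        field_simp
      rw [harg]
    rw [tsum_congr hcongr, hC_def]
    ring
  have hSpos : ∀ x : ℝ, 0 < Sfun (π/γ) x := by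
    intro x
    rw [Sfun]
    apply Summable.tsum_pos (summable_Sfun ha x) (fun n => by positivity) 0
    positivity
  have hkey : ∀ x : ℝ, Sfun (π/γ) (π/2) ≤ Sfun (π/γ) x := Sfun_ge ha
  have hmain : h < 2 * C * Sfun (π/γ) (π/2) := hl ▸ hhl
  constructor
  · intro x
    have hr : dressedEnergyC γ J h (x : ℂ) = ((h/2 - C * Sfun (π/γ) x : ℝ) : ℂ) := by
      rw [dressedEnergyC, tsum_complex_real γ hγ x]
      norm_cast
    rw [hr]
    refine ⟨by simp, ?_⟩
    simp only [Complex.ofReal_re]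
    have h2 := mul_le_mul_of_nonneg_left (hkey x) hCpos.le
    nlinarith
  · intro x
    have hr : dressedEnergyC γ J h ((x : ℂ) - Complex.I * (γ : ℂ))
        = ((h/2 + C * Sfun (π/γ) x : ℝ) : ℂ) := by
      rw [dressedEnergyC, tsum_complex_shift γ hγ x, mul_neg, sub_neg_eq_add]
      norm_cast
    rw [hr]
    refine ⟨by simp, ?_⟩
    simp only [Complex.ofReal_re]
    nlinarith [hSpos x, hCpos]
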